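/- Let (Ω, 𝔉, P) be a probability space, V : Ω → ℝ^n a random vector, and R : Ω → (0, ∞) a measurable function, such that all entries of the random matrices V Vᵀ · R, V Vᵀ, and V Vᵀ / R are integrable, and such that the matrix E[V Vᵀ · R] is invertible. Then the n×n matrix E[V Vᵀ / R] − E[V Vᵀ] · (E[V Vᵀ · R])⁻¹ · E[V Vᵀ] is positive semi-definite. -/

import Mathlib

open MeasureTheory Matrix

section helpers
variable {n : ℕ} {Ω : Type*} [MeasurableSpace Ω] (P : Measure Ω)

lemma sum_sum_eq (x y : Fin n → ℝ) (v : Fin n → ℝ) (c : ℝ) :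
    ∑ i, ∑ j, x i * (v i * v j * c) * y j
      = (∑ i, x i * v i) * (∑ j, y j * v j) * c := by
  rw [Finset.sum_mul_sum, Finset.sum_mul]
  refine Finset.sum_congr rfl fun i _ => ?_
  rw [Finset.sum_mul]
  exact Finset.sum_congr rfl fun j _ => by ring

lemma helper (V : Ω → Fin n → ℝ) (g : Ω → ℝ)
    (hint : ∀ i j, Integrable (fun ω => V ω i * V ω j * g ω) P) (x y : Fin n → ℝ) :
    Integrable (fun ω => (∑ i, x i * V ω i) * (∑ j, y j * V ω j) * g ω) P ∧
    x ⬝ᵥ (Matrix.of fun i j => ∫ ω, V ω i * V ω j * g ω ∂P :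
        Matrix (Fin n) (Fin n) ℝ) *ᵥ y
      = ∫ ω, (∑ i, x i * V ω i) * (∑ j, y j * V ω j) * g ω ∂P := by
  have hterm : ∀ i j, Integrable (fun ω => x i * (V ω i * V ω j * g ω) * y j) P :=
    fun i j => ((hint i j).const_mul (x i)).mul_const (y j)
  have hsum : Integrable (fun ω => ∑ i, ∑ j, x i * (V ω i * V ω j * g ω) * y j) P :=
    integrable_finset_sum _ fun i _ =>
      integrable_finset_sum _ fun j _ => hterm i j
  constructor
  · refine hsum.congr ?_
    filter_upwards with ω
    exact sum_sum_eq x y (V ω) (g ω)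
  · have : ∫ ω, (∑ i, x i * V ω i) * (∑ j, y j * V ω j) * g ω ∂P
        = ∫ ω, ∑ i, ∑ j, x i * (V ω i * V ω j * g ω) * y j ∂P := by
      refine integral_congr_ae ?_
      filter_upwards with ω
      exact (sum_sum_eq x y (V ω) (g ω)).symm
    rw [this, integral_finset_sum _ fun i _ =>
      integrable_finset_sum _ fun j _ => hterm i j]
    simp only [dotProduct, mulVec, Matrix.of_apply]
    refine Finset.sum_congr rfl fun i _ => ?_
    rw [integral_finset_sum _ fun j _ => hterm i j, Finset.mul_sum]
    refine Finset.sum_congr rfl fun j _ => ?_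
    rw [MeasureTheory.integral_mul_const, MeasureTheory.integral_const_mul]
    ring

end helpers

theorem stmt11
    {n : ℕ} {Ω : Type*} [MeasurableSpace Ω] (P : Measure Ω) [IsProbabilityMeasure P]
    (V : Ω → Fin n → ℝ) (R : Ω → ℝ)
    (hV : Measurable V) (hR : Measurable R) (hRpos : ∀ ω, 0 < R ω)
    (hint1 : ∀ i j, Integrable (fun ω => V ω i * V ω j * R ω) P)
    (hint2 : ∀ i j, Integrable (fun ω => V ω i * V ω j) P)
    (hint3 : ∀ i j, Integrable (fun ω => V ω i * V ω j / R ω) P)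
    (hinv : IsUnit ((Matrix.of fun i j => ∫ ω, V ω i * V ω j * R ω ∂P :
        Matrix (Fin n) (Fin n) ℝ)).det) :
    ((Matrix.of fun i j => ∫ ω, V ω i * V ω j / R ω ∂P : Matrix (Fin n) (Fin n) ℝ)
      - (Matrix.of fun i j => ∫ ω, V ω i * V ω j ∂P : Matrix (Fin n) (Fin n) ℝ)
        * (Matrix.of fun i j => ∫ ω, V ω i * V ω j * R ω ∂P : Matrix (Fin n) (Fin n) ℝ)⁻¹
        * (Matrix.of fun i j => ∫ ω, V ω i * V ω j ∂P : Matrix (Fin n) (Fin n) ℝ)).PosSemidef := by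
  set A : Matrix (Fin n) (Fin n) ℝ := Matrix.of fun i j => ∫ ω, V ω i * V ω j * R ω ∂P with hA
  set B : Matrix (Fin n) (Fin n) ℝ := Matrix.of fun i j => ∫ ω, V ω i * V ω j ∂P with hB
  set C : Matrix (Fin n) (Fin n) ℝ := Matrix.of fun i j => ∫ ω, V ω i * V ω j / R ω ∂P with hC
  -- rewritten forms for the helper
  have hint2' : ∀ i j, Integrable (fun ω => V ω i * V ω j * (1:ℝ)) P := by
    intro i j; simpa using hint2 i j
  have hint3' : ∀ i j, Integrable (fun ω => V ω i * V ω j * (R ω)⁻¹) P := by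
    intro i j; simpa [div_eq_mul_inv] using hint3 i j
  have hBrw : B = Matrix.of fun i j => ∫ ω, V ω i * V ω j * (1:ℝ) ∂P := by
    ext i j; simp [hB]
  have hCrw : C = Matrix.of fun i j => ∫ ω, V ω i * V ω j * (R ω)⁻¹ ∂P := by
    ext i j; simp [hC, div_eq_mul_inv]
  -- Hermitian parts
  have hAherm : A.IsHermitian := by
    refine Matrix.ext fun i j => ?_
    simp only [hA, Matrix.conjTranspose_apply, Matrix.of_apply, star_trivial]
    exact integral_congr_ae (by filter_upwards with ω; ring)
  have hBherm : B.IsHermitian := by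
    refine Matrix.ext fun i j => ?_
    simp only [hB, Matrix.conjTranspose_apply, Matrix.of_apply, star_trivial]
    exact integral_congr_ae (by filter_upwards with ω; ring)
  have hCherm : C.IsHermitian := by
    refine Matrix.ext fun i j => ?_
    simp only [hC, Matrix.conjTranspose_apply, Matrix.of_apply, star_trivial]
    exact integral_congr_ae (by filter_upwards with ω; ring)
  have hherm : (C - B * A⁻¹ * B).IsHermitian := by
    refine hCherm.sub ?_
    have := Matrix.isHermitian_mul_mul_conjTranspose B hAherm.inv
    rwa [hBherm.eq] at this
  refine Matrix.posSemidef_iff_dotProduct_mulVec.mpr ⟨hherm, fun x => ?_⟩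
  set y : Fin n → ℝ := A⁻¹ *ᵥ (B *ᵥ x) with hy
  obtain ⟨hIA, hQA⟩ := helper P V R hint1 y y
  obtain ⟨hIBxy, hQBxy⟩ := helper P V (fun _ => (1:ℝ)) hint2' x y
  obtain ⟨_, hQByx⟩ := helper P V (fun _ => (1:ℝ)) hint2' y x
  obtain ⟨hIC, hQC⟩ := helper P V (fun ω => (R ω)⁻¹) hint3' x x
  have hAy : A *ᵥ y = B *ᵥ x := by
    rw [hy, Matrix.mulVec_mulVec, Matrix.mul_nonsing_inv _ hinv, Matrix.one_mulVec]
  -- E[R b²] = E[a b]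
  have hab : (∫ ω, (∑ i, y i * V ω i) * (∑ j, y j * V ω j) * R ω ∂P)
      = ∫ ω, (∑ i, x i * V ω i) * (∑ j, y j * V ω j) * (1:ℝ) ∂P := by
    have e1 : y ⬝ᵥ A *ᵥ y = y ⬝ᵥ B *ᵥ x := by rw [hAy]
    rw [← hQA, e1, hBrw, hQByx]
    exact integral_congr_ae (by filter_upwards with ω; ring)
  -- the quadratic form equals an integral of a nonneg function plus E[ab]… directly:
  have hform : star x ⬝ᵥ (C - B * A⁻¹ * B) *ᵥ x
      = (∫ ω, (∑ i, x i * V ω i) * (∑ j, x j * V ω j) * (R ω)⁻¹ ∂P)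
        - ∫ ω, (∑ i, x i * V ω i) * (∑ j, y j * V ω j) * (1:ℝ) ∂P := by
    have hBAB : (B * A⁻¹ * B) *ᵥ x = B *ᵥ y := by
      rw [hy, ← Matrix.mulVec_mulVec, ← Matrix.mulVec_mulVec]
    rw [star_trivial, Matrix.sub_mulVec, dotProduct_sub, hBAB, hCrw, hBrw, hQC, hQBxy]
  rw [hform]
  have key : (∫ ω, (∑ i, x i * V ω i) * (∑ j, x j * V ω j) * (R ω)⁻¹ ∂P)
      - (∫ ω, (∑ i, x i * V ω i) * (∑ j, y j * V ω j) * (1:ℝ) ∂P)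
      = ∫ ω, ((∑ i, x i * V ω i) - R ω * (∑ i, y i * V ω i))^2 / R ω ∂P := by
    have expand : ∀ ω, ((∑ i, x i * V ω i) - R ω * (∑ i, y i * V ω i))^2 / R ω
        = (∑ i, x i * V ω i) * (∑ j, x j * V ω j) * (R ω)⁻¹
          - 2 * ((∑ i, x i * V ω i) * (∑ j, y j * V ω j) * (1:ℝ))
          + (∑ i, y i * V ω i) * (∑ j, y j * V ω j) * R ω := by
      intro ω
      have hr : R ω ≠ 0 := (hRpos ω).ne'
      field_simp
      ring
    rw [integral_congr_ae (Filter.Eventually.of_forall expand)]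
    rw [integral_add (by exact (hIC.sub (hIBxy.const_mul 2))) hIA,
        integral_sub hIC (hIBxy.const_mul 2), MeasureTheory.integral_const_mul, hab]
    ring
  rw [key]
  exact integral_nonneg fun ω => div_nonneg (sq_nonneg _) (hRpos ω).le
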